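/- Let F be a finite set of positive integers and k ∈ ℕ. With the greedy decomposition operators E_i as defined, F ∈ kS₁ if and only if E_{k+1}(F) = ∅. -/

import Mathlib

open Finset

/-- `F < G` for finite sets: every element of `F` is below every element of `G`. -/
def FinsetLT (F G : Finset ℕ) : Prop := ∀ x ∈ F, ∀ y ∈ G, x < y

/-- Membership in the Schreier family `S₁`: a finite set of positive integers
with `|F| ≤ min F` (the empty set belongs trivially). -/
def IsSchreier (F : Finset ℕ) : Prop := ∀ n ∈ F, 0 < n ∧ F.card ≤ n

/-- `F` is a union of at most `d` sets `F₁ < F₂ < ⋯`, each in the family `P`. -/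
def Combine (P : Finset ℕ → Prop) (d : ℕ) (F : Finset ℕ) : Prop :=
  ∃ L : List (Finset ℕ), L.length ≤ d ∧ L.Pairwise FinsetLT ∧
    (∀ G ∈ L, P G) ∧ L.foldr (· ∪ ·) ∅ = F

/-- Membership in `S₂`. -/
def MemS2 (F : Finset ℕ) : Prop :=
  F = ∅ ∨ ∃ h : F.Nonempty, Combine IsSchreier (F.min' h) F

/-- Membership in `S₃`. -/
def MemS3 (F : Finset ℕ) : Prop :=
  F = ∅ ∨ ∃ h : F.Nonempty, Combine MemS2 (F.min' h) F

/-- `F` is a maximal member of the family `P` (among sets of positive integers). -/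
def IsFull (P : Finset ℕ → Prop) (F : Finset ℕ) : Prop :=
  P F ∧ ∀ n : ℕ, 0 < n → n ∉ F → ¬ P (insert n F)

/-- `F ∈ full_{a,b}(P)`. -/
def FullAB (P : Finset ℕ → Prop) (a b : ℕ) (F : Finset ℕ) : Prop :=
  P F ∧ F ⊆ Finset.Icc a b ∧ a ∈ F ∧
    ∀ n ∈ Finset.Icc a b, n ∉ F → ¬ P (insert n F)

/-- The tower function `τ`. -/
def tau : ℕ → ℕ → ℕ
  | 0, a => a
  | i + 1, a => 2 ^ tau i a

/-- `E₁(F)`: `F` itself if `|F| ≤ min F`, otherwise the `min F` smallest elements of `F`. -/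
def E1 (F : Finset ℕ) : Finset ℕ :=
  if h : F.Nonempty then ((F.sort (· ≤ ·)).take (F.min' h)).toFinset else ∅

/-- Union of the first `i` greedy pieces. -/
def Eacc : ℕ → Finset ℕ → Finset ℕ
  | 0, _ => ∅
  | i + 1, F => Eacc i F ∪ E1 (F \ Eacc i F)

/-- The `i`-th greedy piece `E_i(F)` (for `i ≥ 1`). -/
def Epiece (i : ℕ) (F : Finset ℕ) : Finset ℕ := E1 (F \ Eacc (i - 1) F)

open Classical in
/-- `E₁*(F)`: `F` itself if `F ∈ S₂`, otherwise `E₁(F) ∪ ⋯ ∪ E_{min F}(F)`. -/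
noncomputable def E1star (F : Finset ℕ) : Finset ℕ :=
  if MemS2 F then F
  else if h : F.Nonempty then Eacc (F.min' h) F else ∅

/-- Union of the first `i` starred greedy pieces. -/
noncomputable def EaccStar : ℕ → Finset ℕ → Finset ℕ
  | 0, _ => ∅
  | i + 1, F => EaccStar i F ∪ E1star (F \ EaccStar i F)

/-- The `i`-th starred greedy piece `E_i*(F)` (for `i ≥ 1`). -/
noncomputable def EpieceStar (i : ℕ) (F : Finset ℕ) : Finset ℕ :=
  E1star (F \ EaccStar (i - 1) F)

lemma mem_foldr {L : List (Finset ℕ)} {x : ℕ} :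
    x ∈ L.foldr (· ∪ ·) ∅ ↔ ∃ G ∈ L, x ∈ G := by
  induction L with
  | nil => simp
  | cons a t ih => simp [ih]

lemma foldr_sdiff (L : List (Finset ℕ)) (A : Finset ℕ) :
    (L.map (· \ A)).foldr (· ∪ ·) ∅ = L.foldr (· ∪ ·) ∅ \ A := by
  induction L with
  | nil => simp
  | cons a t ih => simp [ih, Finset.union_sdiff_distrib]

lemma E1_subset (F : Finset ℕ) : E1 F ⊆ F := by
  intro x hx
  unfold E1 at hx
  split at hx
  · rw [List.mem_toFinset] at hx
    exact (Finset.mem_sort _).mp (List.mem_of_mem_take hx)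
  · simp at hx

lemma E1_lt {F : Finset ℕ} {x y : ℕ} (hx : x ∈ E1 F) (hy : y ∈ F) (hy' : y ∉ E1 F) :
    x < y := by
  have hne : F.Nonempty := ⟨x, E1_subset F hx⟩
  unfold E1 at hx hy'
  rw [dif_pos hne, List.mem_toFinset] at hx hy'
  set s := F.sort (· ≤ ·) with hs
  have hys : y ∈ s := (Finset.mem_sort _).mpr hy
  have hyd : y ∈ s.drop (F.min' hne) := by
    rcases List.mem_append.mp
        (by rw [List.take_append_drop (F.min' hne) s]; exact hys) with h | h
    · exact absurd h hy'
    · exact h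
  have hsorted : s.Pairwise (· < ·) := F.sortedLT_sort.pairwise
  have := (List.pairwise_append.mp
    (by rw [List.take_append_drop (F.min' hne) s]; exact hsorted)).2.2
  exact this x hx y hyd

lemma schreier_subset {G F : Finset ℕ} (h : G ⊆ F) (hF : IsSchreier F) : IsSchreier G :=
  fun n hn => ⟨(hF n (h hn)).1, (Finset.card_le_card h).trans (hF n (h hn)).2⟩

lemma E1_schreier {F : Finset ℕ} (hpos : ∀ n ∈ F, 0 < n) : IsSchreier (E1 F) := by
  intro n hn
  have hnF := E1_subset F hn
  refine ⟨hpos n hnF, ?_⟩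
  have hne : F.Nonempty := ⟨n, hnF⟩
  have hcard : (E1 F).card ≤ F.min' hne := by
    unfold E1
    rw [dif_pos hne]
    have hnd : ((F.sort (· ≤ ·)).take (F.min' hne)).Nodup :=
      (F.sort_nodup _).sublist (List.take_sublist _ _)
    rw [List.toFinset_card_of_nodup hnd]
    exact (List.length_take_le _ _)
  exact hcard.trans (F.min'_le n hnF)

lemma greedy {F G : Finset ℕ} (hGF : G ⊆ F) (hG : IsSchreier G)
    (hlt : ∀ x ∈ G, ∀ y ∈ F, y ∉ G → x < y) : G ⊆ E1 F := by
  intro x hx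
  have hxF : x ∈ F := hGF hx
  have hne : F.Nonempty := ⟨x, hxF⟩
  set m := F.min' hne with hm
  have hmG : F.min' hne ∈ G := by
    by_contra h
    exact absurd (F.min'_le x hxF) (not_le.mpr (hlt x hx _ (F.min'_mem hne) h))
  have hcardG : G.card ≤ m := (hG _ hmG).2
  by_contra hxe
  unfold E1 at hxe
  rw [dif_pos hne, List.mem_toFinset] at hxe
  set s := F.sort (· ≤ ·) with hs
  have hxs : x ∈ s := (Finset.mem_sort _).mpr hxF
  have hxd : x ∈ s.drop m := by
    rcases List.mem_append.mp (by rw [List.take_append_drop m s]; exact hxs) with h | h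
    · exact absurd h hxe
    · exact h
  have hlen : (s.take m).length = m := by
    rw [List.length_take]
    have hml : m < s.length := by
      by_contra hc
      push_neg at hc
      rw [List.drop_eq_nil_of_le hc] at hxd
      simp at hxd
    omega
  have hsorted : s.Pairwise (· < ·) := F.sortedLT_sort.pairwise
  have hsub : insert x ((s.take m).toFinset) ⊆ G := by
    intro y hy
    rcases Finset.mem_insert.mp hy with rfl | hy
    · exact hx
    · rw [List.mem_toFinset] at hy
      have hyF : y ∈ F := (Finset.mem_sort _).mp (List.mem_of_mem_take hy)
      by_contra hyG
      have hxy := hlt x hx y hyF hyG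
      have := (List.pairwise_append.mp
        (by rw [List.take_append_drop m s]; exact hsorted)).2.2 y hy x hxd
      omega
  have hnd : (s.take m).Nodup := (F.sort_nodup _).sublist (List.take_sublist _ _)
  have hxnot : x ∉ (s.take m).toFinset := by rw [List.mem_toFinset]; exact hxe
  have hly := Finset.card_le_card hsub
  rw [Finset.card_insert_of_notMem hxnot, List.toFinset_card_of_nodup hnd, hlen] at hly
  omega

lemma Eacc_shift (i : ℕ) (F : Finset ℕ) :
    Eacc (i + 1) F = E1 F ∪ Eacc i (F \ E1 F) := by
  induction i with
  | zero => simp [Eacc]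
  | succ i ih =>
    show Eacc (i + 1) F ∪ E1 (F \ Eacc (i + 1) F) =
      E1 F ∪ (Eacc i (F \ E1 F) ∪ E1 ((F \ E1 F) \ Eacc i (F \ E1 F)))
    rw [ih]
    have hsd : (F \ E1 F) \ Eacc i (F \ E1 F) = F \ (E1 F ∪ Eacc i (F \ E1 F)) :=
      sdiff_sdiff _ _ _
    rw [hsd, Finset.union_assoc]

lemma E1_eq_empty {F : Finset ℕ} (hpos : ∀ n ∈ F, 0 < n) : E1 F = ∅ ↔ F = ∅ := by
  constructor
  · intro h
    by_contra hne'
    have hne : F.Nonempty := Finset.nonempty_iff_ne_empty.mpr hne'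
    set m := F.min' hne with hm
    have hm1 : 1 ≤ m := hpos _ (F.min'_mem hne)
    have hs : F.sort (· ≤ ·) ≠ [] := by
      intro hc
      obtain ⟨a, ha⟩ := hne
      have := (Finset.mem_sort (α := ℕ) (· ≤ ·)).mpr ha
      rw [hc] at this
      simp at this
    obtain ⟨a, t, hat⟩ := List.exists_cons_of_ne_nil hs
    have ha : a ∈ E1 F := by
      unfold E1
      rw [dif_pos hne, List.mem_toFinset, hat]
      obtain ⟨m', hm'⟩ := Nat.exists_eq_succ_of_ne_zero (by omega : F.min' hne ≠ 0)
      rw [hm', List.take_succ_cons]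
      exact List.mem_cons_self
    rw [h] at ha
    simp at ha
  · intro h
    simp [E1, h]

lemma main_lemma : ∀ k F, (∀ n ∈ F, 0 < n) → (Combine IsSchreier k F ↔ F ⊆ Eacc k F) := by
  intro k
  induction k with
  | zero =>
    intro F hpos
    constructor
    · rintro ⟨L, hlen, _, _, hfold⟩
      rw [Nat.le_zero, List.length_eq_zero_iff] at hlen
      subst hlen
      simp at hfold
      simp [Eacc, ← hfold]
    · intro h
      have hF : F = ∅ := Finset.subset_empty.mp h
      exact ⟨[], by simp, by simp, by simp, by simp [hF]⟩
  | succ k ih =>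
    intro F hpos
    rw [Eacc_shift]
    have hpos' : ∀ n ∈ F \ E1 F, 0 < n := fun n hn => hpos n (Finset.mem_sdiff.mp hn).1
    constructor
    · rintro ⟨L, hlen, hpw, hP, hfold⟩
      rcases L with _ | ⟨G, T⟩
      · simp at hfold
        intro x hx
        rw [← hfold] at hx
        simp at hx
      · have hGF : G ⊆ F := by
          intro x hx
          rw [← hfold]
          exact mem_foldr.mpr ⟨G, List.mem_cons_self, hx⟩
        have hlt : ∀ x ∈ G, ∀ y ∈ F, y ∉ G → x < y := by
          intro x hx y hyF hyG
          rw [← hfold] at hyF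
          rcases mem_foldr.mp hyF with ⟨H, hH, hyH⟩
          rcases List.mem_cons.mp hH with rfl | hH
          · exact absurd hyH hyG
          · exact (List.pairwise_cons.mp hpw).1 H hH x hx y hyH
        have hGE : G ⊆ E1 F := greedy hGF (hP G (List.mem_cons_self)) hlt
        have hC : Combine IsSchreier k (F \ E1 F) := by
          refine ⟨T.map (· \ E1 F), ?_, ?_, ?_, ?_⟩
          · rw [List.length_map]
            simpa using hlen
          · rw [List.pairwise_map]
            exact ((List.pairwise_cons.mp hpw).2).imp (fun h x hx y hy =>
              h x (Finset.mem_sdiff.mp hx).1 y (Finset.mem_sdiff.mp hy).1)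
          · intro H hH
            rcases List.mem_map.mp hH with ⟨H', hH', rfl⟩
            exact schreier_subset Finset.sdiff_subset (hP H' (List.mem_cons_of_mem _ hH'))
          · rw [foldr_sdiff]
            set A := E1 F with hA
            rw [← hfold, List.foldr_cons, Finset.union_sdiff_distrib,
              Finset.sdiff_eq_empty_iff_subset.mpr hGE, Finset.empty_union]
        have hsub' := (ih (F \ E1 F) hpos').mp hC
        intro x hx
        by_cases hxE : x ∈ E1 F
        · exact Finset.mem_union_left _ hxE
        · exact Finset.mem_union_right _ (hsub' (Finset.mem_sdiff.mpr ⟨hx, hxE⟩))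
    · intro h
      have hF'sub : F \ E1 F ⊆ Eacc k (F \ E1 F) := by
        intro x hx
        rcases Finset.mem_sdiff.mp hx with ⟨hxF, hxE⟩
        rcases Finset.mem_union.mp (h hxF) with h1 | h1
        · exact absurd h1 hxE
        · exact h1
      obtain ⟨L', hlen', hpw', hP', hfold'⟩ := (ih (F \ E1 F) hpos').mpr hF'sub
      refine ⟨E1 F :: L', by simpa using hlen', ?_, ?_, ?_⟩
      · rw [List.pairwise_cons]
        refine ⟨fun H hH x hx y hy => ?_, hpw'⟩
        have hyF' : y ∈ F \ E1 F := by
          rw [← hfold']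
          exact mem_foldr.mpr ⟨H, hH, hy⟩
        exact E1_lt hx (Finset.mem_sdiff.mp hyF').1 (Finset.mem_sdiff.mp hyF').2
      · intro H hH
        rcases List.mem_cons.mp hH with rfl | hH
        · exact E1_schreier hpos
        · exact hP' H hH
      · rw [List.foldr_cons, hfold']
        exact Finset.union_sdiff_of_subset (E1_subset F)

theorem stmt11 (F : Finset ℕ) (hpos : ∀ n ∈ F, 0 < n) (k : ℕ) :
    Combine IsSchreier k F ↔ Epiece (k + 1) F = ∅ := by
  have h1 : Epiece (k + 1) F = E1 (F \ Eacc k F) := by simp [Epiece]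
  rw [main_lemma k F hpos, h1,
    E1_eq_empty (fun n hn => hpos n (Finset.mem_sdiff.mp hn).1),
    Finset.sdiff_eq_empty_iff_subset]
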